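/- arXiv:2103.07826 — 4 statements merged into one kernel-verified Lean document; each statement's English description precedes it below -/
import Mathlib

section
/- Let C_ε = ∂B(r₀ n₀, r₀) \ B(0, ε) be the arc of the circle of radius r₀ = 1/κ₀ tangent to the origin with outward normal n₀ = (cos φ, sin φ), traversed counterclockwise, with κ₀ > 0. Then ∫_{C_ε} G · τ = -κ₀ ( A_φ log(1/(ε κ₀)) + B_φ ) + O(ε²) as ε → 0, where A_φ = 1 + ν - 3ν cos²φ and B_φ = 2( log 2 - (1 - log 2)ν - (3 log 2 - 2)ν cos²φ ), and the O(ε²) is uniform in κ₀ ∈ (0, K] for fixed K. -/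
open Real Set

noncomputable def nrm (z : ℝ × ℝ) : ℝ := Real.sqrt (z.1 ^ 2 + z.2 ^ 2)

def dot (a b : ℝ × ℝ) : ℝ := a.1 * b.1 + a.2 * b.2

noncomputable def G (ν : ℝ) (z : ℝ × ℝ) : ℝ × ℝ :=
  ((1 - ν) * z.2 / (nrm z) ^ 3, -z.1 / (nrm z) ^ 3)

/-- Parametrization of the tangent circle `∂B(r₀ n₀, r₀)`, `n₀ = (cos φ, sin φ)`, `r₀ = 1/κ₀`. -/
noncomputable def paramC (κ₀ φ θ : ℝ) : ℝ × ℝ :=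
  ((1 / κ₀) * (Real.cos φ + Real.cos (θ + φ + π)),
   (1 / κ₀) * (Real.sin φ + Real.sin (θ + φ + π)))

/-- Derivative of `paramC` in `θ`. -/
noncomputable def dparamC (κ₀ φ θ : ℝ) : ℝ × ℝ :=
  ((1 / κ₀) * (-Real.sin (θ + φ + π)), (1 / κ₀) * Real.cos (θ + φ + π))

noncomputable def Aconst (ν φ : ℝ) : ℝ := 1 + ν - 3 * ν * Real.cos φ ^ 2

noncomputable def Bconst (ν φ : ℝ) : ℝ :=
  2 * (Real.log 2 - (1 - Real.log 2) * ν - (3 * Real.log 2 - 2) * ν * Real.cos φ ^ 2)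

/-! ### Auxiliary lemmas -/

lemma cos_full (θ : ℝ) : Real.cos θ = 1 - 2 * Real.sin (θ/2) ^ 2 := by
  have h := Real.cos_two_mul (θ/2); have h2 := Real.sin_sq_add_cos_sq (θ/2)
  have : Real.cos (2*(θ/2)) = Real.cos θ := by ring_nf
  linarith [this ▸ h]

lemma sin_full (θ : ℝ) : Real.sin θ = 2 * Real.sin (θ/2) * Real.cos (θ/2) := by
  rw [← Real.sin_two_mul]; ring_nf

lemma nrm_paramC (κ₀ φ θ : ℝ) (hκ : 0 < κ₀) (hs : 0 ≤ Real.sin (θ/2)) :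
    nrm (paramC κ₀ φ θ) = 2 * Real.sin (θ/2) / κ₀ := by
  have key : (paramC κ₀ φ θ).1 ^ 2 + (paramC κ₀ φ θ).2 ^ 2 = (2 * Real.sin (θ/2) / κ₀) ^ 2 := by
    simp only [paramC, Real.cos_add, Real.sin_add, Real.cos_pi, Real.sin_pi, cos_full θ, sin_full θ]
    have h1 := Real.sin_sq_add_cos_sq (θ/2); have h2 := Real.sin_sq_add_cos_sq φ
    field_simp
    linear_combination (4*Real.sin (θ/2)^2*(Real.sin φ^2 + Real.cos φ^2)) * h1 + 4*Real.sin (θ/2)^2 * h2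
  rw [show nrm (paramC κ₀ φ θ) = Real.sqrt ((paramC κ₀ φ θ).1 ^ 2 + (paramC κ₀ φ θ).2 ^ 2) from rfl,
    key, Real.sqrt_sq (by positivity)]

lemma integrand_eq (ν φ κ₀ θ : ℝ) (hκ : 0 < κ₀) (hs : 0 < Real.sin (θ/2)) :
    dot (G ν (paramC κ₀ φ θ)) (dparamC κ₀ φ θ) =
      -(κ₀/8) * (2 / Real.sin (θ/2)
        + ν * (8 * (Real.sin φ * Real.cos φ) * Real.cos (θ/2)
          - 2 * (Real.sin φ * Real.cos φ) * Real.cos (θ/2) / Real.sin (θ/2) ^ 2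
          + (2 * Real.sin φ ^ 2 - 4 * Real.cos φ ^ 2) / Real.sin (θ/2)
          + (4 * Real.cos φ ^ 2 - 4 * Real.sin φ ^ 2) * Real.sin (θ/2))) := by
  have hn := nrm_paramC κ₀ φ θ hκ hs.le
  simp only [dot, G, dparamC]
  rw [hn]
  simp only [paramC, Real.cos_add, Real.sin_add, Real.cos_pi, Real.sin_pi,
    cos_full θ, sin_full θ]
  have h1 := Real.sin_sq_add_cos_sq (θ/2); have h2 := Real.sin_sq_add_cos_sq φ
  field_simp
  linear_combination ((32*ν*Real.cos φ^2 - 32*Real.sin φ^2 - 32*Real.cos φ^2) * Real.sin (θ/2)^2) * h1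
    + (-16*Real.sin (θ/2)^2) * h2

noncomputable def Faux (ν φ κ₀ θ : ℝ) : ℝ :=
  -(κ₀/2) * ((1 + ν*(Real.sin φ^2 - 2*Real.cos φ^2))
      * (Real.log (Real.sin (θ/2)) - Real.log (1 + Real.cos (θ/2)))
    + ν*(4*(Real.sin φ*Real.cos φ)*Real.sin (θ/2)
         + (Real.sin φ*Real.cos φ)/Real.sin (θ/2)
         + (2*Real.sin φ^2 - 2*Real.cos φ^2)*Real.cos (θ/2)))

lemma Faux_hasDeriv (ν φ κ₀ θ : ℝ) (hs : 0 < Real.sin (θ/2)) :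
    HasDerivAt (Faux ν φ κ₀)
      (-(κ₀/8) * (2 / Real.sin (θ/2)
        + ν * (8 * (Real.sin φ * Real.cos φ) * Real.cos (θ/2)
          - 2 * (Real.sin φ * Real.cos φ) * Real.cos (θ/2) / Real.sin (θ/2) ^ 2
          + (2 * Real.sin φ ^ 2 - 4 * Real.cos φ ^ 2) / Real.sin (θ/2)
          + (4 * Real.cos φ ^ 2 - 4 * Real.sin φ ^ 2) * Real.sin (θ/2)))) θ := by
  have h1 := Real.sin_sq_add_cos_sq (θ/2)
  have hc : -1 < Real.cos (θ/2) := by nlinarith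
  have hcpos : 0 < 1 + Real.cos (θ/2) := by linarith
  have hhalf : HasDerivAt (fun θ : ℝ => θ/2) (1/2) θ := (hasDerivAt_id θ).div_const 2
  have hsin : HasDerivAt (fun θ : ℝ => Real.sin (θ/2)) (Real.cos (θ/2) * (1/2)) θ :=
    by have := (Real.hasDerivAt_sin (θ/2)).comp θ hhalf; exact this
  have hcos : HasDerivAt (fun θ : ℝ => Real.cos (θ/2)) (-Real.sin (θ/2) * (1/2)) θ :=
    by have := (Real.hasDerivAt_cos (θ/2)).comp θ hhalf; exact this
  have hlogs : HasDerivAt (fun θ : ℝ => Real.log (Real.sin (θ/2)))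
      ((Real.cos (θ/2) * (1/2)) / Real.sin (θ/2)) θ := hsin.log hs.ne'
  have hlogc : HasDerivAt (fun θ : ℝ => Real.log (1 + Real.cos (θ/2)))
      ((0 + -Real.sin (θ/2) * (1/2)) / (1 + Real.cos (θ/2))) θ :=
    ((hasDerivAt_const θ (1:ℝ)).add hcos).log hcpos.ne'
  have hinv : HasDerivAt (fun θ : ℝ => (Real.sin φ*Real.cos φ) / Real.sin (θ/2))
      ((0 * Real.sin (θ/2) - (Real.sin φ*Real.cos φ) * (Real.cos (θ/2) * (1/2))) / Real.sin (θ/2) ^ 2) θ :=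
    (hasDerivAt_const θ _).div hsin hs.ne'
  have H := (((hlogs.sub hlogc).const_mul (1 + ν*(Real.sin φ^2 - 2*Real.cos φ^2))).add
    ((((hsin.const_mul (4*(Real.sin φ*Real.cos φ))).add hinv).add
       (hcos.const_mul (2*Real.sin φ^2 - 2*Real.cos φ^2))).const_mul ν)).const_mul (-(κ₀/2))
  refine H.congr_deriv ?_
  set s := Real.sin (θ/2) with hs_def
  set c := Real.cos (θ/2) with hc_def
  field_simp
  linear_combination (-(1 + ν*Real.sin φ^2 - 2*ν*Real.cos φ^2) * s * 8 * κ₀) * h1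

set_option maxHeartbeats 1600000 in
theorem circle_integral_expansion (ν : ℝ) (hν : ν ∈ Ioo (-1 : ℝ) (1 / 2)) (φ : ℝ)
    (K : ℝ) (hK : 0 < K) :
    ∃ C > 0, ∃ ε₀ > 0, ∀ ε κ₀ : ℝ, 0 < ε → ε < ε₀ → 0 < κ₀ → κ₀ ≤ K →
      |(∫ θ in (2 * Real.arcsin (ε * κ₀ / 2))..(2 * π - 2 * Real.arcsin (ε * κ₀ / 2)),
          dot (G ν (paramC κ₀ φ θ)) (dparamC κ₀ φ θ))
        + κ₀ * (Aconst ν φ * Real.log (1 / (ε * κ₀)) + Bconst ν φ)| ≤ C * ε ^ 2 := by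
  obtain ⟨M, hM⟩ : ∃ M : ℝ, M = |Aconst ν φ| + |2 * ν * (Real.sin φ ^ 2 - Real.cos φ ^ 2)| := ⟨_, rfl⟩
  have hM0 : 0 ≤ M := by rw [hM]; positivity
  refine ⟨M * K^3 / 4 + 1, by positivity, 1/K, by positivity, fun ε κ₀ hε hεK hκ hκK => ?_⟩
  set σ : ℝ := ε * κ₀ / 2 with hσ_def
  have hσ0 : 0 < σ := by positivity
  have hσ1 : σ < 1/2 := by
    have : ε * κ₀ < 1 := by
      calc ε * κ₀ ≤ ε * K := by gcongr
        _ < (1/K) * K := by gcongr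
        _ = 1 := by field_simp
    simp only [hσ_def]; linarith
  have hσle1 : σ ≤ 1 := by linarith
  set γ : ℝ := Real.sqrt (1 - σ^2) with hγ_def
  have hγ0 : 0 ≤ γ := Real.sqrt_nonneg _
  have hγsq : γ^2 = 1 - σ^2 := Real.sq_sqrt (by nlinarith)
  have hγlt1 : γ < 1 := by
    rw [hγ_def]
    have : (1:ℝ) - σ^2 < 1 := by nlinarith
    calc Real.sqrt (1 - σ^2) < Real.sqrt 1 := by
          apply Real.sqrt_lt_sqrt (by nlinarith) this
      _ = 1 := Real.sqrt_one
  set α : ℝ := 2 * Real.arcsin σ with hα_def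
  have harc0 : 0 < Real.arcsin σ := Real.arcsin_pos.2 hσ0
  have harclt : Real.arcsin σ < π/2 := by
    have := Real.arcsin_lt_pi_div_two (x := σ)
    rw [this]; linarith
  have hαle : α ≤ 2 * π - α := by
    simp only [hα_def]; nlinarith [Real.pi_pos]
  -- positivity of sin (θ/2) on the interval
  have hsinpos : ∀ x ∈ Set.uIcc α (2 * π - α), 0 < Real.sin (x/2) := by
    intro x hx
    rw [Set.uIcc_of_le hαle] at hx
    apply Real.sin_pos_of_pos_of_lt_pi
    · have := hx.1; simp only [hα_def] at this; linarith
    · have := hx.2; simp only [hα_def] at this; nlinarith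
  -- FTC
  have hderiv : ∀ x ∈ Set.uIcc α (2 * π - α),
      HasDerivAt (Faux ν φ κ₀) (dot (G ν (paramC κ₀ φ x)) (dparamC κ₀ φ x)) x := by
    intro x hx
    rw [integrand_eq ν φ κ₀ x hκ (hsinpos x hx)]
    exact Faux_hasDeriv ν φ κ₀ x (hsinpos x hx)
  have hcont : ContinuousOn (fun x => dot (G ν (paramC κ₀ φ x)) (dparamC κ₀ φ x))
      (Set.uIcc α (2 * π - α)) := by
    have hs2 : ContinuousOn (fun x : ℝ => Real.sin (x/2)) (Set.uIcc α (2 * π - α)) :=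
      (Real.continuous_sin.comp (continuous_id.div_const 2)).continuousOn
    have hc2 : ContinuousOn (fun x : ℝ => Real.cos (x/2)) (Set.uIcc α (2 * π - α)) :=
      (Real.continuous_cos.comp (continuous_id.div_const 2)).continuousOn
    have hne : ∀ x ∈ Set.uIcc α (2 * π - α), Real.sin (x/2) ≠ 0 :=
      fun x hx => (hsinpos x hx).ne'
    have hne2 : ∀ x ∈ Set.uIcc α (2 * π - α), Real.sin (x/2)^2 ≠ 0 :=
      fun x hx => pow_ne_zero 2 (hne x hx)
    apply ContinuousOn.congr (f := fun x =>
      -(κ₀/8) * (2 / Real.sin (x/2)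
        + ν * (8 * (Real.sin φ * Real.cos φ) * Real.cos (x/2)
          - 2 * (Real.sin φ * Real.cos φ) * Real.cos (x/2) / Real.sin (x/2) ^ 2
          + (2 * Real.sin φ ^ 2 - 4 * Real.cos φ ^ 2) / Real.sin (x/2)
          + (4 * Real.cos φ ^ 2 - 4 * Real.sin φ ^ 2) * Real.sin (x/2))))
    · apply ContinuousOn.mul continuousOn_const
      apply ContinuousOn.add (ContinuousOn.div continuousOn_const hs2 hne)
      apply ContinuousOn.mul continuousOn_const
      apply ContinuousOn.add
      apply ContinuousOn.add
      apply ContinuousOn.sub (ContinuousOn.mul continuousOn_const hc2)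
      · exact ContinuousOn.div (ContinuousOn.mul continuousOn_const hc2) (hs2.pow 2) hne2
      · exact ContinuousOn.div continuousOn_const hs2 hne
      · exact ContinuousOn.mul continuousOn_const hs2
    · intro x hx
      exact integrand_eq ν φ κ₀ x hκ (hsinpos x hx)
  have hint : IntervalIntegrable (fun x => dot (G ν (paramC κ₀ φ x)) (dparamC κ₀ φ x))
      MeasureTheory.volume α (2 * π - α) :=
    hcont.intervalIntegrable
  have hFTC := intervalIntegral.integral_eq_sub_of_hasDerivAt hderiv hint
  rw [hFTC]
  -- endpoint evaluations
  have e1 : α / 2 = Real.arcsin σ := by rw [hα_def]; ring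
  have e2 : (2 * π - α) / 2 = π - Real.arcsin σ := by rw [hα_def]; ring
  have hsa : Real.sin (α/2) = σ := by rw [e1, Real.sin_arcsin (by linarith) hσle1]
  have hca : Real.cos (α/2) = γ := by rw [e1, Real.cos_arcsin]
  have hsb : Real.sin ((2*π - α)/2) = σ := by rw [e2, Real.sin_pi_sub, Real.sin_arcsin (by linarith) hσle1]
  have hcb : Real.cos ((2*π - α)/2) = -γ := by rw [e2, Real.cos_pi_sub, Real.cos_arcsin]
  have hFa : Faux ν φ κ₀ α = -(κ₀/2) * ((1 + ν*(Real.sin φ^2 - 2*Real.cos φ^2))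
      * (Real.log σ - Real.log (1 + γ))
    + ν*(4*(Real.sin φ*Real.cos φ)*σ + (Real.sin φ*Real.cos φ)/σ
         + (2*Real.sin φ^2 - 2*Real.cos φ^2)*γ)) := by
    rw [Faux, hsa, hca]
  have hFb : Faux ν φ κ₀ (2*π - α) = -(κ₀/2) * ((1 + ν*(Real.sin φ^2 - 2*Real.cos φ^2))
      * (Real.log σ - Real.log (1 - γ))
    + ν*(4*(Real.sin φ*Real.cos φ)*σ + (Real.sin φ*Real.cos φ)/σ
         + (2*Real.sin φ^2 - 2*Real.cos φ^2)*(-γ))) := by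
    rw [Faux, hsb, hcb]
    ring_nf
  -- log identities
  have h1γ : (0:ℝ) < 1 + γ := by linarith
  have h1γ' : (0:ℝ) < 1 - γ := by linarith
  have hlogprod : Real.log (1 - γ) + Real.log (1 + γ) = 2 * Real.log σ := by
    rw [← Real.log_mul h1γ'.ne' h1γ.ne']
    have : (1 - γ) * (1 + γ) = σ^2 := by linear_combination -hγsq
    rw [this, Real.log_pow]
    push_cast; ring
  have hlogεκ : Real.log (1 / (ε * κ₀)) = -(Real.log 2 + Real.log σ) := by
    have hεκ : ε * κ₀ = 2 * σ := by rw [hσ_def]; ring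
    rw [hεκ, one_div, Real.log_inv, Real.log_mul two_ne_zero hσ0.ne']
  -- reduce to the clean expression
  have key : Faux ν φ κ₀ (2*π - α) - Faux ν φ κ₀ α
      + κ₀ * (Aconst ν φ * Real.log (1 / (ε * κ₀)) + Bconst ν φ)
      = κ₀ * (Aconst ν φ * (Real.log 2 - Real.log (1 + γ))
          + 2 * ν * (Real.sin φ^2 - Real.cos φ^2) * (γ - 1)) := by
    rw [hFa, hFb, hlogεκ]
    have hbp := Real.sin_sq_add_cos_sq φ
    have : Real.log (1 - γ) = 2 * Real.log σ - Real.log (1 + γ) := by linarith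
    rw [this, Aconst, Bconst]
    linear_combination (κ₀*ν*(Real.log σ - Real.log (1+γ) + 2)) * hbp
  rw [key]
  -- estimates
  have hX1 : Real.log 2 - Real.log (1 + γ) ≤ 1 - γ := by
    have h2 : Real.log 2 - Real.log (1 + γ) = Real.log (2 / (1 + γ)) := by
      rw [Real.log_div two_ne_zero h1γ.ne']
    rw [h2]
    have := Real.log_le_sub_one_of_pos (x := 2/(1+γ)) (by positivity)
    have h3 : 2/(1+γ) - 1 ≤ 1 - γ := by
      rw [div_sub_one h1γ.ne']
      rw [div_le_iff₀ h1γ]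
      nlinarith
    linarith
  have hX0 : 0 ≤ Real.log 2 - Real.log (1 + γ) := by
    have := Real.log_le_log h1γ (by linarith : (1:ℝ) + γ ≤ 2)
    linarith
  have hY : 1 - γ ≤ σ^2 := by nlinarith [hγsq, hγ0, hγlt1]
  have habs : |Aconst ν φ * (Real.log 2 - Real.log (1 + γ))
      + 2 * ν * (Real.sin φ^2 - Real.cos φ^2) * (γ - 1)| ≤ M * σ^2 := by
    have h1 : |Aconst ν φ * (Real.log 2 - Real.log (1 + γ))| ≤ |Aconst ν φ| * σ^2 := by
      rw [abs_mul]
      apply mul_le_mul_of_nonneg_left _ (abs_nonneg _)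
      rw [abs_of_nonneg hX0]; linarith
    have h2 : |2 * ν * (Real.sin φ^2 - Real.cos φ^2) * (γ - 1)|
        ≤ |2 * ν * (Real.sin φ^2 - Real.cos φ^2)| * σ^2 := by
      rw [abs_mul]
      apply mul_le_mul_of_nonneg_left _ (abs_nonneg _)
      rw [abs_of_nonpos (by linarith : γ - 1 ≤ 0)]; linarith
    calc |Aconst ν φ * (Real.log 2 - Real.log (1 + γ))
        + 2 * ν * (Real.sin φ^2 - Real.cos φ^2) * (γ - 1)|
        ≤ |Aconst ν φ * (Real.log 2 - Real.log (1 + γ))|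
          + |2 * ν * (Real.sin φ^2 - Real.cos φ^2) * (γ - 1)| := abs_add_le _ _
      _ ≤ |Aconst ν φ| * σ^2 + |2 * ν * (Real.sin φ^2 - Real.cos φ^2)| * σ^2 := by linarith
      _ = M * σ^2 := by rw [hM]; ring
  rw [abs_mul, abs_of_pos hκ]
  calc κ₀ * |Aconst ν φ * (Real.log 2 - Real.log (1 + γ))
        + 2 * ν * (Real.sin φ^2 - Real.cos φ^2) * (γ - 1)|
      ≤ κ₀ * (M * σ^2) := by
        apply mul_le_mul_of_nonneg_left habs hκ.le
    _ = M * κ₀^3 * ε^2 / 4 := by rw [hσ_def]; ring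
    _ ≤ M * K^3 * ε^2 / 4 := by
        have h3 : κ₀^3 ≤ K^3 := by gcongr
        have h4 : 0 ≤ ε^2 := sq_nonneg ε
        have h5 := mul_le_mul_of_nonneg_left h3 (mul_nonneg hM0 h4)
        nlinarith [h5]
    _ ≤ (M * K^3 / 4 + 1) * ε^2 := by nlinarith [sq_nonneg ε]
end

section
/- As k ↑ 1, ∫₀^{π/2} (1 - k² cos²θ)^{-3/2} dθ = 1/(1-k²) + O(log(1/(1-k²))); equivalently, with k² = 1/(1+ℓ²), ∫₀^{π/2} (sin²θ + ℓ²)^{-3/2} dθ = 1/ℓ² + O(|log ℓ|) as ℓ → 0. -/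
open Real Set

private lemma ell_upos {ℓ : ℝ} (hl : 0 < ℓ) (θ : ℝ) : 0 < Real.sin θ ^ 2 + ℓ ^ 2 := by
  positivity

private lemma ell_cont {ℓ : ℝ} (hl : 0 < ℓ) (p : ℝ) :
    Continuous (fun θ : ℝ => (Real.sin θ ^ 2 + ℓ ^ 2) ^ p) :=
  ((Real.continuous_sin.pow 2).add continuous_const).rpow_const
    (fun x => Or.inl (ne_of_gt (ell_upos hl x)))

private lemma ell_int {ℓ : ℝ} (hl : 0 < ℓ) (p a b : ℝ) :
    IntervalIntegrable (fun θ : ℝ => (Real.sin θ ^ 2 + ℓ ^ 2) ^ p)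
      MeasureTheory.volume a b :=
  (ell_cont hl p).intervalIntegrable a b

private lemma sq_rpow_neg_half {u : ℝ} (hu : 0 < u) : (u ^ 2 : ℝ) ^ (-(1:ℝ)/2) = u⁻¹ := by
  rw [← Real.rpow_natCast u 2, ← Real.rpow_mul hu.le]
  norm_num
  exact Real.rpow_neg_one u

private lemma ell_J_eval {ℓ : ℝ} (hl : 0 < ℓ) :
    (∫ θ in (0:ℝ)..(π/2), Real.cos θ * (Real.sin θ ^ 2 + ℓ ^ 2) ^ (-(3:ℝ)/2))
      = (1 + ℓ ^ 2) ^ (-(1:ℝ)/2) / ℓ ^ 2 := by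
  have hl2 : (ℓ:ℝ) ^ 2 ≠ 0 := by positivity
  have h := intervalIntegral.integral_eq_sub_of_hasDerivAt (a := (0:ℝ)) (b := π/2)
    (f := fun θ => Real.sin θ * (Real.sin θ ^ 2 + ℓ ^ 2) ^ (-(1:ℝ)/2) / ℓ ^ 2)
    (f' := fun θ => Real.cos θ * (Real.sin θ ^ 2 + ℓ ^ 2) ^ (-(3:ℝ)/2))
    (fun θ _ => by
      have hup := ell_upos hl θ
      have hu : HasDerivAt (fun θ : ℝ => Real.sin θ ^ 2 + ℓ ^ 2)
          ((2:ℕ) * Real.sin θ ^ 1 * Real.cos θ) θ :=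
        ((Real.hasDerivAt_sin θ).pow 2).add_const _
      have hr := hu.rpow_const (p := (-(1:ℝ)/2)) (Or.inl (ne_of_gt hup))
      have hm := ((Real.hasDerivAt_sin θ).mul hr).div_const (ℓ ^ 2)
      refine hm.congr_deriv ?_
      have e1 : (-(1:ℝ)/2 - 1) = (-(3:ℝ)/2) := by norm_num
      have e2 : (Real.sin θ ^ 2 + ℓ ^ 2) ^ (-(1:ℝ)/2)
          = (Real.sin θ ^ 2 + ℓ ^ 2) * (Real.sin θ ^ 2 + ℓ ^ 2) ^ (-(3:ℝ)/2) := by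
        rw [show (-(1:ℝ)/2) = 1 + (-(3:ℝ)/2) by norm_num, Real.rpow_add hup, Real.rpow_one]
      rw [e1, e2]
      field_simp
      ring)
    (((Real.continuous_cos.mul (ell_cont hl _)).intervalIntegrable _ _))
  rw [h]
  simp [Real.sin_pi_div_two]

set_option maxHeartbeats 1000000 in
theorem elliptic_order3_expansion :
    ∃ C > 0, ∃ ℓ₀ > 0, ∀ ℓ : ℝ, 0 < ℓ → ℓ < ℓ₀ →
      |(∫ θ in (0 : ℝ)..(π / 2), (Real.sin θ ^ 2 + ℓ ^ 2) ^ (-(3 : ℝ) / 2))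
        - 1 / ℓ ^ 2| ≤ C * |Real.log ℓ| := by
  refine ⟨3, by norm_num, Real.exp (-10), Real.exp_pos _, fun ℓ hl hl0 => ?_⟩
  have hℓ1 : ℓ < 1 := lt_trans hl0 (by
    have := Real.exp_lt_one_iff.mpr (show (-10:ℝ) < 0 by norm_num)
    linarith)
  have hpi : (3:ℝ) < π := Real.pi_gt_three
  have hpi4 : π ≤ 4 := Real.pi_le_four
  have hℓpi : ℓ < π / 2 := by linarith
  have hlog : Real.log ℓ < -10 := by
    have := Real.log_lt_log hl hl0
    rwa [Real.log_exp] at this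
  have habs : |Real.log ℓ| = -Real.log ℓ := abs_of_neg (by linarith)
  set I := ∫ θ in (0:ℝ)..(π/2), (Real.sin θ ^ 2 + ℓ ^ 2) ^ (-(3:ℝ)/2) with hI
  set J := ∫ θ in (0:ℝ)..(π/2), Real.cos θ * (Real.sin θ ^ 2 + ℓ ^ 2) ^ (-(3:ℝ)/2) with hJdef
  have hJint : IntervalIntegrable
      (fun θ : ℝ => Real.cos θ * (Real.sin θ ^ 2 + ℓ ^ 2) ^ (-(3:ℝ)/2))
      MeasureTheory.volume 0 (π/2) :=
    (Real.continuous_cos.mul (ell_cont hl _)).intervalIntegrable _ _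
  -- step: I - J = ∫ (1 - cos θ) * u^{-3/2}
  have hIJ : I - J = ∫ θ in (0:ℝ)..(π/2),
      (1 - Real.cos θ) * (Real.sin θ ^ 2 + ℓ ^ 2) ^ (-(3:ℝ)/2) := by
    rw [hI, hJdef, ← intervalIntegral.integral_sub (ell_int hl _ _ _) hJint]
    apply intervalIntegral.integral_congr
    intro θ _
    ring
  -- pointwise bound on [0, π/2]
  have hpt : ∀ θ ∈ Icc (0:ℝ) (π/2),
      (1 - Real.cos θ) * (Real.sin θ ^ 2 + ℓ ^ 2) ^ (-(3:ℝ)/2)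
        ≤ (Real.sin θ ^ 2 + ℓ ^ 2) ^ (-(1:ℝ)/2) := by
    intro θ hθ
    have hup := ell_upos hl θ
    have hc : 0 ≤ Real.cos θ := Real.cos_nonneg_of_mem_Icc ⟨by linarith [hθ.1], hθ.2⟩
    have h1 : 1 - Real.cos θ ≤ Real.sin θ ^ 2 := by
      have := Real.sin_sq θ
      nlinarith [Real.cos_le_one θ]
    have e2 : (Real.sin θ ^ 2 + ℓ ^ 2) ^ (-(1:ℝ)/2)
        = (Real.sin θ ^ 2 + ℓ ^ 2) * (Real.sin θ ^ 2 + ℓ ^ 2) ^ (-(3:ℝ)/2) := by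
      rw [show (-(1:ℝ)/2) = 1 + (-(3:ℝ)/2) by norm_num, Real.rpow_add hup, Real.rpow_one]
    rw [e2]
    have hP : 0 ≤ (Real.sin θ ^ 2 + ℓ ^ 2) ^ (-(3:ℝ)/2) := Real.rpow_nonneg hup.le _
    nlinarith [sq_nonneg ℓ, sq_nonneg (Real.sin θ)]
  have hIJnonneg : 0 ≤ I - J := by
    rw [hIJ]
    apply intervalIntegral.integral_nonneg (by positivity)
    intro θ hθ
    have hc : Real.cos θ ≤ 1 := Real.cos_le_one θ
    have := Real.rpow_nonneg (ell_upos hl θ).le (-(3:ℝ)/2)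
    nlinarith
  have hIJle : I - J ≤ ∫ θ in (0:ℝ)..(π/2), (Real.sin θ ^ 2 + ℓ ^ 2) ^ (-(1:ℝ)/2) := by
    rw [hIJ]
    apply intervalIntegral.integral_mono_on (by positivity)
      ((Continuous.mul (by continuity) (ell_cont hl _)).intervalIntegrable _ _)
      (ell_int hl _ _ _) hpt
  -- split the integral of u^{-1/2}
  have hsplit : (∫ θ in (0:ℝ)..(π/2), (Real.sin θ ^ 2 + ℓ ^ 2) ^ (-(1:ℝ)/2))
      = (∫ θ in (0:ℝ)..ℓ, (Real.sin θ ^ 2 + ℓ ^ 2) ^ (-(1:ℝ)/2))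
        + ∫ θ in ℓ..(π/2), (Real.sin θ ^ 2 + ℓ ^ 2) ^ (-(1:ℝ)/2) :=
    (intervalIntegral.integral_add_adjacent_intervals (ell_int hl _ _ _) (ell_int hl _ _ _)).symm
  have hpart1 : (∫ θ in (0:ℝ)..ℓ, (Real.sin θ ^ 2 + ℓ ^ 2) ^ (-(1:ℝ)/2)) ≤ 1 := by
    have hmono : ∀ θ ∈ Icc (0:ℝ) ℓ,
        (Real.sin θ ^ 2 + ℓ ^ 2) ^ (-(1:ℝ)/2) ≤ ℓ⁻¹ := by
      intro θ _
      have : (ℓ ^ 2 : ℝ) ^ (-(1:ℝ)/2) = ℓ⁻¹ := sq_rpow_neg_half hl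
      rw [← this]
      exact Real.rpow_le_rpow_of_nonpos (by positivity)
        (by nlinarith [sq_nonneg (Real.sin θ)]) (by norm_num)
    have := intervalIntegral.integral_mono_on hl.le (ell_int hl _ _ _)
      (intervalIntegrable_const) hmono
    have hev : (∫ _ in (0:ℝ)..ℓ, (ℓ⁻¹ : ℝ)) = 1 := by
      rw [intervalIntegral.integral_const, sub_zero, smul_eq_mul]
      field_simp
    linarith [this, hev.le]
  have hpart2 : (∫ θ in ℓ..(π/2), (Real.sin θ ^ 2 + ℓ ^ 2) ^ (-(1:ℝ)/2))
      ≤ π/2 * (Real.log (π/2) - Real.log ℓ) := by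
    have hmono : ∀ θ ∈ Icc ℓ (π/2),
        (Real.sin θ ^ 2 + ℓ ^ 2) ^ (-(1:ℝ)/2) ≤ π/2 * (1/θ) := by
      intro θ hθ
      have hθ0 : 0 < θ := lt_of_lt_of_le hl hθ.1
      have hsin : 2/π * θ ≤ Real.sin θ := Real.mul_le_sin hθ0.le hθ.2
      have hq : 0 < 2/π * θ := by positivity
      have hsq : (2/π * θ) ^ 2 ≤ Real.sin θ ^ 2 + ℓ ^ 2 := by
        nlinarith [sq_nonneg ℓ]
      have := Real.rpow_le_rpow_of_nonpos (by positivity) hsq (show (-(1:ℝ)/2) ≤ 0 by norm_num)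
      rw [sq_rpow_neg_half hq] at this
      calc (Real.sin θ ^ 2 + ℓ ^ 2) ^ (-(1:ℝ)/2) ≤ (2/π * θ)⁻¹ := this
        _ = π/2 * (1/θ) := by
            field_simp
    have hint2 : IntervalIntegrable (fun θ : ℝ => π/2 * (1/θ))
        MeasureTheory.volume ℓ (π/2) := by
      apply ContinuousOn.intervalIntegrable
      apply ContinuousOn.mul continuousOn_const
      apply ContinuousOn.div continuousOn_const continuousOn_id
      intro x hx
      rw [uIcc_of_le (le_of_lt hℓpi)] at hx
      exact ne_of_gt (lt_of_lt_of_le hl hx.1)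
    have := intervalIntegral.integral_mono_on (le_of_lt hℓpi) (ell_int hl _ _ _) hint2 hmono
    have hev : (∫ θ in ℓ..(π/2), π/2 * (1/θ)) = π/2 * (Real.log (π/2) - Real.log ℓ) := by
      rw [intervalIntegral.integral_const_mul, integral_one_div (by
        rw [uIcc_of_le (le_of_lt hℓpi)]
        intro hx
        exact absurd hx.1 (not_le.mpr hl)),
        Real.log_div (ne_of_gt pi_div_two_pos) (ne_of_gt hl)]
    linarith [this, hev.le]
  -- bound |J - 1/ℓ²| ≤ 1/2
  have hJval : J = (1 + ℓ ^ 2) ^ (-(1:ℝ)/2) / ℓ ^ 2 := ell_J_eval hl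
  have hJclose : |J - 1/ℓ^2| ≤ 1/2 := by
    set y := (1 + ℓ ^ 2) ^ (-(1:ℝ)/2) with hy
    have hy0 : 0 < y := Real.rpow_pos_of_pos (by positivity) _
    have hy1 : y ≤ 1 := Real.rpow_le_one_of_one_le_of_nonpos (by nlinarith) (by norm_num)
    have hysq : y ^ 2 * (1 + ℓ ^ 2) = 1 := by
      have h1 : y * y = (1 + ℓ ^ 2)⁻¹ := by
        rw [hy, ← Real.rpow_add (by positivity : (0:ℝ) < 1 + ℓ ^ 2),
          show (-(1:ℝ)/2 + -(1:ℝ)/2) = -1 by norm_num, Real.rpow_neg_one]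
      rw [pow_two, h1, inv_mul_cancel₀ (by positivity : (1 + ℓ ^ 2 : ℝ) ≠ 0)]
    have hkey : 1 - y ≤ ℓ^2 / 2 := by
      nlinarith [sq_nonneg (y - 1), sq_nonneg ℓ, hy0, hy1]
    have hl2 : (0:ℝ) < ℓ ^ 2 := by positivity
    rw [hJval]
    rw [abs_of_nonpos (by
      have : y / ℓ^2 ≤ 1 / ℓ^2 := by
        exact div_le_div_of_nonneg_right hy1 hl2.le
      linarith)]
    have : (1 - y) / ℓ^2 ≤ (ℓ^2/2) / ℓ^2 := by
      exact div_le_div_of_nonneg_right hkey hl2.le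
    have he : (ℓ^2/2) / ℓ^2 = 1/2 := by field_simp
    rw [he] at this
    calc -(y / ℓ ^ 2 - 1 / ℓ ^ 2) = (1 - y)/ℓ^2 := by ring
      _ ≤ 1/2 := this
  -- finish
  have hbound : I - J ≤ 1 + π/2 * (Real.log (π/2) - Real.log ℓ) := by
    calc I - J ≤ _ := hIJle
      _ = _ := hsplit
      _ ≤ 1 + π/2 * (Real.log (π/2) - Real.log ℓ) := by linarith [hpart1, hpart2]
  have hlogpi : Real.log (π/2) ≤ 1 := by
    have := Real.log_le_sub_one_of_pos (pi_div_two_pos)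
    linarith
  have h2 : (0:ℝ) ≤ 1 - Real.log ℓ := by linarith
  have h3 : π/2 * (Real.log (π/2) - Real.log ℓ) ≤ 2 * (1 - Real.log ℓ) := by
    have ha : π/2 * (Real.log (π/2) - Real.log ℓ) ≤ π/2 * (1 - Real.log ℓ) := by
      apply mul_le_mul_of_nonneg_left (by linarith) (by positivity)
    have hb : π/2 * (1 - Real.log ℓ) ≤ 2 * (1 - Real.log ℓ) := by
      apply mul_le_mul_of_nonneg_right (by linarith) h2
    linarith
  rw [habs]
  have htri : |I - 1/ℓ^2| ≤ (I - J) + |J - 1/ℓ^2| := by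
    have := abs_sub_abs_le_abs_sub (I - 1/ℓ^2) (J - 1/ℓ^2)
    have h4 : I - 1/ℓ^2 - (J - 1/ℓ^2) = I - J := by ring
    calc |I - 1/ℓ^2| = |(I - J) + (J - 1/ℓ^2)| := by ring_nf
      _ ≤ |I - J| + |J - 1/ℓ^2| := abs_add_le _ _
      _ = (I - J) + |J - 1/ℓ^2| := by rw [abs_of_nonneg hIJnonneg]
  calc |I - 1/ℓ^2| ≤ (I - J) + |J - 1/ℓ^2| := htri
    _ ≤ (1 + π/2 * (Real.log (π/2) - Real.log ℓ)) + 1/2 := by linarith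
    _ ≤ 3 * -Real.log ℓ := by linarith [h3, hlog]
end

section
/- As ℓ → 0, ∫₀^{π/2} (sin²θ + ℓ²)^{-5/2} dθ = (2/3) ℓ^{-4} + O(ℓ^{-2}). -/
open Real Set

lemma aux_rpow52 {x : ℝ} (hx : 0 < x) :
    x ^ (-(5:ℝ)/2) = 1 / (x ^ 2 * Real.sqrt x) := by
  rw [show (-(5:ℝ)/2) = -(((2:ℕ):ℝ) + 1/2) by norm_num, Real.rpow_neg hx.le,
    Real.rpow_add hx, Real.rpow_natCast, ← Real.sqrt_eq_rpow, one_div]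

lemma aux_sin_cubic {x : ℝ} (hx : 0 ≤ x) : x - Real.sin x ≤ x ^ 3 / 6 := by
  have key : ∀ y : ℝ, HasDerivAt (fun t => Real.sin t - t + t ^ 3 / 6)
      (Real.cos y - 1 + y ^ 2 / 2) y := by
    intro y
    have h1 := ((Real.hasDerivAt_sin y).sub (hasDerivAt_id y)).add
      ((hasDerivAt_pow 3 y).div_const 6)
    refine h1.congr_deriv ?_
    push_cast
    ring
  have hmono : MonotoneOn (fun t => Real.sin t - t + t ^ 3 / 6) (Ici 0) := by
    apply monotoneOn_of_deriv_nonneg (convex_Ici 0)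
    · exact (Continuous.continuousOn (by continuity))
    · intro y _
      exact ((key y).differentiableAt).differentiableWithinAt
    · intro y hy
      rw [(key y).deriv]
      nlinarith [Real.one_sub_sq_div_two_le_cos (x := y)]
  have h0 := hmono (self_mem_Ici) (mem_Ici.2 hx) hx
  simp at h0
  linarith

lemma aux_mvt52 {a b : ℝ} (ha : 0 < a) (hab : a ≤ b) :
    1 / (a ^ 2 * Real.sqrt a) - 1 / (b ^ 2 * Real.sqrt b) ≤ 5 * (b - a) / (a ^ 3 * Real.sqrt a) := by
  have hb : 0 < b := ha.trans_le hab
  set p := Real.sqrt a with hp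
  set q := Real.sqrt b with hq
  have hp0 : 0 < p := Real.sqrt_pos.2 ha
  have hq0 : 0 < q := Real.sqrt_pos.2 hb
  have hpq : p ≤ q := Real.sqrt_le_sqrt hab
  have hpa : p ^ 2 = a := Real.sq_sqrt ha.le
  have hqb : q ^ 2 = b := Real.sq_sqrt hb.le
  rw [← hpa, ← hqb]
  rw [div_sub_div _ _ (by positivity) (by positivity),
    div_le_div_iff₀ (by positivity) (by positivity)]
  have h1 : q ^ 5 - p ^ 5 ≤ 5 * (q - p) * q ^ 4 := by
    nlinarith [mul_nonneg (sub_nonneg.2 hpq)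
      (show (0:ℝ) ≤ 4 * q ^ 4 - q ^ 3 * p - q ^ 2 * p ^ 2 - q * p ^ 3 - p ^ 4 by
        nlinarith [pow_le_pow_left₀ hp0.le hpq 4, pow_le_pow_left₀ hp0.le hpq 3,
          pow_le_pow_left₀ hp0.le hpq 2, mul_pos hp0 hq0, sq_nonneg (q - p),
          mul_nonneg (mul_nonneg hp0.le hp0.le) (mul_nonneg hq0.le hq0.le)])]
  have h2 : (q ^ 5 - p ^ 5) * p ^ 7 ≤ 5 * (q - p) * q ^ 4 * p ^ 7 :=
    mul_le_mul_of_nonneg_right h1 (by positivity)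
  have h3 : 5 * (q - p) * q ^ 4 * p ^ 7 ≤ 5 * (q ^ 2 - p ^ 2) * q ^ 5 * p ^ 5 := by
    nlinarith [mul_nonneg (mul_nonneg (sub_nonneg.2 hpq)
      (show (0:ℝ) ≤ q ^ 2 + p * q - p ^ 2 by nlinarith [mul_pos hp0 hq0]))
      (by positivity : (0:ℝ) ≤ 5 * q ^ 4 * p ^ 5)]
  nlinarith [h2, h3]


lemma aux_mvt32_lower {v u : ℝ} (hv : 0 < v) (hvu : v ≤ u) :
    3 / 2 * Real.sqrt v * (u - v) ≤ u * Real.sqrt u - v * Real.sqrt v := by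
  have hu : 0 < u := hv.trans_le hvu
  have hs0 : 0 < Real.sqrt v := Real.sqrt_pos.2 hv
  have ht0 : 0 < Real.sqrt u := Real.sqrt_pos.2 hu
  have hst : Real.sqrt v ≤ Real.sqrt u := Real.sqrt_le_sqrt hvu
  have hsv : Real.sqrt v ^ 2 = v := Real.sq_sqrt hv.le
  have htu : Real.sqrt u ^ 2 = u := Real.sq_sqrt hu.le
  nlinarith [mul_nonneg (sq_nonneg (Real.sqrt u - Real.sqrt v))
    (by linarith : (0:ℝ) ≤ 2 * Real.sqrt u + Real.sqrt v)]

lemma aux_mvt32_upper {v u : ℝ} (hv : 0 < v) (hvu : v ≤ u) :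
    u * Real.sqrt u - v * Real.sqrt v ≤ 3 / 2 * Real.sqrt u * (u - v) := by
  have hu : 0 < u := hv.trans_le hvu
  have hs0 : 0 < Real.sqrt v := Real.sqrt_pos.2 hv
  have ht0 : 0 < Real.sqrt u := Real.sqrt_pos.2 hu
  have hst : Real.sqrt v ≤ Real.sqrt u := Real.sqrt_le_sqrt hvu
  have hsv : Real.sqrt v ^ 2 = v := Real.sq_sqrt hv.le
  have htu : Real.sqrt u ^ 2 = u := Real.sq_sqrt hu.le
  nlinarith [mul_nonneg (sq_nonneg (Real.sqrt u - Real.sqrt v))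
    (by linarith : (0:ℝ) ≤ Real.sqrt u + 2 * Real.sqrt v)]

lemma aux_derivH {ℓ : ℝ} (hℓ : 0 < ℓ) (x : ℝ) :
    HasDerivAt (fun y => y / (ℓ ^ 2 * Real.sqrt (y ^ 2 + ℓ ^ 2)))
      (1 / ((x ^ 2 + ℓ ^ 2) * Real.sqrt (x ^ 2 + ℓ ^ 2))) x := by
  have hx2 : 0 < x ^ 2 + ℓ ^ 2 := by positivity
  have hs0 : 0 < Real.sqrt (x ^ 2 + ℓ ^ 2) := Real.sqrt_pos.2 hx2
  have hu : HasDerivAt (fun y : ℝ => y ^ 2 + ℓ ^ 2) (2 * x) x := by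
    simpa using ((hasDerivAt_pow 2 x).add_const (ℓ ^ 2))
  have hs : HasDerivAt (fun y => Real.sqrt (y ^ 2 + ℓ ^ 2))
      (2 * x / (2 * Real.sqrt (x ^ 2 + ℓ ^ 2))) x := hu.sqrt hx2.ne'
  have hden : HasDerivAt (fun y => ℓ ^ 2 * Real.sqrt (y ^ 2 + ℓ ^ 2))
      (ℓ ^ 2 * (2 * x / (2 * Real.sqrt (x ^ 2 + ℓ ^ 2)))) x := hs.const_mul _
  have h := (hasDerivAt_id x).div hden (by positivity)
  refine h.congr_deriv ?_
  have hs2 : Real.sqrt (x ^ 2 + ℓ ^ 2) ^ 2 = x ^ 2 + ℓ ^ 2 := Real.sq_sqrt hx2.le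
  simp only [id]
  field_simp
  linear_combination x ^ 2 * hs2

lemma aux_derivF {ℓ : ℝ} (hℓ : 0 < ℓ) (x : ℝ) :
    HasDerivAt (fun y => y * (3 * ℓ ^ 2 + 2 * y ^ 2) /
        (3 * ℓ ^ 4 * ((y ^ 2 + ℓ ^ 2) * Real.sqrt (y ^ 2 + ℓ ^ 2))))
      (1 / ((x ^ 2 + ℓ ^ 2) ^ 2 * Real.sqrt (x ^ 2 + ℓ ^ 2))) x := by
  have hx2 : 0 < x ^ 2 + ℓ ^ 2 := by positivity
  have hs0 : 0 < Real.sqrt (x ^ 2 + ℓ ^ 2) := Real.sqrt_pos.2 hx2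
  have hu : HasDerivAt (fun y : ℝ => y ^ 2 + ℓ ^ 2) (2 * x) x := by
    simpa using ((hasDerivAt_pow 2 x).add_const (ℓ ^ 2))
  have hs : HasDerivAt (fun y => Real.sqrt (y ^ 2 + ℓ ^ 2))
      (2 * x / (2 * Real.sqrt (x ^ 2 + ℓ ^ 2))) x := hu.sqrt hx2.ne'
  have hnum : HasDerivAt (fun y : ℝ => y * (3 * ℓ ^ 2 + 2 * y ^ 2))
      (1 * (3 * ℓ ^ 2 + 2 * x ^ 2) + x * (2 * (2 * x))) x := by
    have := (hasDerivAt_id x).mul (((hasDerivAt_pow 2 x).const_mul 2).const_add (3 * ℓ ^ 2))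
    refine this.congr_deriv ?_
    simp only [id]
    push_cast
    ring
  have hden : HasDerivAt (fun y => 3 * ℓ ^ 4 * ((y ^ 2 + ℓ ^ 2) * Real.sqrt (y ^ 2 + ℓ ^ 2)))
      (3 * ℓ ^ 4 * ((2 * x) * Real.sqrt (x ^ 2 + ℓ ^ 2) +
        (x ^ 2 + ℓ ^ 2) * (2 * x / (2 * Real.sqrt (x ^ 2 + ℓ ^ 2))))) x :=
    (hu.mul hs).const_mul _
  have h := hnum.div hden (by positivity)
  refine h.congr_deriv ?_
  have hs2 : Real.sqrt (x ^ 2 + ℓ ^ 2) ^ 2 = x ^ 2 + ℓ ^ 2 := Real.sq_sqrt hx2.le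
  field_simp
  linear_combination x ^ 2 * (3 * ℓ ^ 2 + 2 * x ^ 2) * hs2

set_option maxHeartbeats 1000000 in
-- pointwise bound lemma
lemma aux_pointwise {ℓ θ : ℝ} (hℓ : 0 < ℓ) (hθ0 : 0 ≤ θ) (hθπ : θ ≤ π / 2) :
    1 / ((Real.sin θ ^ 2 + ℓ ^ 2) ^ 2 * Real.sqrt (Real.sin θ ^ 2 + ℓ ^ 2))
      - 1 / ((θ ^ 2 + ℓ ^ 2) ^ 2 * Real.sqrt (θ ^ 2 + ℓ ^ 2))
      ≤ (5 * π ^ 7 / 384) * (1 / ((θ ^ 2 + ℓ ^ 2) * Real.sqrt (θ ^ 2 + ℓ ^ 2))) := by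
  have hπ : (2:ℝ) ≤ π := Real.two_le_pi
  set a := Real.sin θ ^ 2 + ℓ ^ 2 with ha_def
  set b := θ ^ 2 + ℓ ^ 2 with hb_def
  have ha : 0 < a := by positivity
  have hb : 0 < b := by positivity
  have hab : a ≤ b := by
    have := Real.sin_sq_le_sq (x := θ); simp only [ha_def, hb_def]; linarith
  have hsin_le : Real.sin θ ≤ θ := Real.sin_le hθ0
  have hsin_nonneg : 0 ≤ Real.sin θ :=
    Real.sin_nonneg_of_nonneg_of_le_pi hθ0 (by linarith [Real.pi_pos])
  have hba : b - a ≤ θ ^ 4 / 3 := by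
    have hc := aux_sin_cubic hθ0
    simp only [ha_def, hb_def]
    nlinarith [hc, hsin_le, hsin_nonneg]
  have hjordan : 2 / π * θ ≤ Real.sin θ := Real.mul_le_sin hθ0 hθπ
  have hπ0 : 0 < π := by linarith
  have halow : 4 / π ^ 2 * b ≤ a := by
    have h1 : (2 / π * θ) ^ 2 ≤ Real.sin θ ^ 2 := by
      apply sq_le_sq' _ hjordan; nlinarith [mul_nonneg (by positivity : (0:ℝ) ≤ 2/π) hθ0]
    have h2 : 4 / π ^ 2 ≤ 1 := by rw [div_le_one (by positivity)]; nlinarith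
    simp only [ha_def, hb_def]
    have : (2 / π * θ) ^ 2 = 4 / π ^ 2 * θ ^ 2 := by ring
    nlinarith [sq_nonneg ℓ]
  have hsqrt_low : 2 / π * Real.sqrt b ≤ Real.sqrt a := by
    have h1 : Real.sqrt (4 / π ^ 2 * b) ≤ Real.sqrt a := Real.sqrt_le_sqrt halow
    rwa [Real.sqrt_mul (by positivity), show (4 / π ^ 2 : ℝ) = (2/π)^2 by ring,
      Real.sqrt_sq (by positivity)] at h1
  have hsb : 0 < Real.sqrt b := Real.sqrt_pos.2 hb
  have hsa : 0 < Real.sqrt a := Real.sqrt_pos.2 ha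
  have hdenom : 128 / π ^ 7 * (b ^ 3 * Real.sqrt b) ≤ a ^ 3 * Real.sqrt a := by
    have h1 : (4 / π ^ 2 * b) ^ 3 ≤ a ^ 3 := pow_le_pow_left₀ (by positivity) halow 3
    have h2 : (4 / π ^ 2 * b) ^ 3 = 64 / π ^ 6 * b ^ 3 := by ring
    calc 128 / π ^ 7 * (b ^ 3 * Real.sqrt b)
        = (64 / π ^ 6 * b ^ 3) * (2 / π * Real.sqrt b) := by ring
      _ ≤ a ^ 3 * Real.sqrt a := by
          apply mul_le_mul (by linarith) hsqrt_low (by positivity) (by positivity)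
  calc 1 / (a ^ 2 * Real.sqrt a) - 1 / (b ^ 2 * Real.sqrt b)
      ≤ 5 * (b - a) / (a ^ 3 * Real.sqrt a) := aux_mvt52 ha hab
    _ ≤ 5 * (θ ^ 4 / 3) / (128 / π ^ 7 * (b ^ 3 * Real.sqrt b)) := by
        apply div_le_div₀ (by positivity) (by linarith) (by positivity) hdenom
    _ = (5 * π ^ 7 / 384) * (θ ^ 4 / (b ^ 3 * Real.sqrt b)) := by
        field_simp; ring
    _ ≤ (5 * π ^ 7 / 384) * (1 / (b * Real.sqrt b)) := by
        have hθ4 : θ ^ 4 ≤ b ^ 2 := by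
          have : θ ^ 2 ≤ b := by simp only [hb_def]; nlinarith [sq_nonneg ℓ]
          nlinarith [sq_nonneg θ]
        apply mul_le_mul_of_nonneg_left _ (by positivity)
        rw [div_le_div_iff₀ (by positivity) (by positivity)]
        nlinarith [mul_pos hb hsb, mul_le_mul_of_nonneg_right hθ4 (mul_pos hb hsb).le]

set_option maxHeartbeats 1000000 in
theorem elliptic_order5_expansion :
    ∃ C > 0, ∃ ℓ₀ > 0, ∀ ℓ : ℝ, 0 < ℓ → ℓ < ℓ₀ →
      |(∫ θ in (0 : ℝ)..(π / 2), (Real.sin θ ^ 2 + ℓ ^ 2) ^ (-(5 : ℝ) / 2))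
        - (2 / 3) / ℓ ^ 4| ≤ C / ℓ ^ 2 := by
  have hπ : (2:ℝ) ≤ π := Real.two_le_pi
  have hπ0 : 0 < π := by linarith
  refine ⟨5 * π ^ 7 / 384 + 1, by positivity, 1, one_pos, fun ℓ hℓ hℓ1 => ?_⟩
  have hπ2 : (0:ℝ) ≤ π / 2 := by positivity
  have hcf : Continuous fun θ : ℝ =>
      1 / ((Real.sin θ ^ 2 + ℓ ^ 2) ^ 2 * Real.sqrt (Real.sin θ ^ 2 + ℓ ^ 2)) :=
    Continuous.div continuous_const (by fun_prop) (fun x => by positivity)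
  have hcg : Continuous fun θ : ℝ =>
      1 / ((θ ^ 2 + ℓ ^ 2) ^ 2 * Real.sqrt (θ ^ 2 + ℓ ^ 2)) :=
    Continuous.div continuous_const (by fun_prop) (fun x => by positivity)
  have hch : Continuous fun θ : ℝ =>
      1 / ((θ ^ 2 + ℓ ^ 2) * Real.sqrt (θ ^ 2 + ℓ ^ 2)) :=
    Continuous.div continuous_const (by fun_prop) (fun x => by positivity)
  have hrw : (∫ θ in (0:ℝ)..(π/2), (Real.sin θ ^ 2 + ℓ ^ 2) ^ (-(5:ℝ)/2))
      = ∫ θ in (0:ℝ)..(π/2),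
          1 / ((Real.sin θ ^ 2 + ℓ ^ 2) ^ 2 * Real.sqrt (Real.sin θ ^ 2 + ℓ ^ 2)) :=
    intervalIntegral.integral_congr (fun θ _ => aux_rpow52 (by positivity))
  rw [hrw]
  set A := ∫ θ in (0:ℝ)..(π/2),
      1 / ((Real.sin θ ^ 2 + ℓ ^ 2) ^ 2 * Real.sqrt (Real.sin θ ^ 2 + ℓ ^ 2)) with hA
  set B := ∫ θ in (0:ℝ)..(π/2),
      1 / ((θ ^ 2 + ℓ ^ 2) ^ 2 * Real.sqrt (θ ^ 2 + ℓ ^ 2)) with hB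
  -- exact values
  have hIg : B = (π/2) * (3 * ℓ ^ 2 + 2 * (π/2) ^ 2) /
      (3 * ℓ ^ 4 * (((π/2) ^ 2 + ℓ ^ 2) * Real.sqrt ((π/2) ^ 2 + ℓ ^ 2))) := by
    rw [hB, intervalIntegral.integral_eq_sub_of_hasDerivAt (fun x _ => aux_derivF hℓ x)
      (hcg.intervalIntegrable _ _)]
    norm_num
  have hIh : (∫ θ in (0:ℝ)..(π/2), 1 / ((θ ^ 2 + ℓ ^ 2) * Real.sqrt (θ ^ 2 + ℓ ^ 2)))
      = (π/2) / (ℓ ^ 2 * Real.sqrt ((π/2) ^ 2 + ℓ ^ 2)) := by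
    rw [intervalIntegral.integral_eq_sub_of_hasDerivAt (fun x _ => aux_derivH hℓ x)
      (hch.intervalIntegrable _ _)]
    norm_num
  -- B ≤ A
  have hgle : ∀ θ ∈ Icc (0:ℝ) (π/2),
      1 / ((θ ^ 2 + ℓ ^ 2) ^ 2 * Real.sqrt (θ ^ 2 + ℓ ^ 2)) ≤
      1 / ((Real.sin θ ^ 2 + ℓ ^ 2) ^ 2 * Real.sqrt (Real.sin θ ^ 2 + ℓ ^ 2)) := by
    intro θ _
    have hab : Real.sin θ ^ 2 + ℓ ^ 2 ≤ θ ^ 2 + ℓ ^ 2 := by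
      nlinarith [Real.sin_sq_le_sq (x := θ)]
    apply one_div_le_one_div_of_le (by positivity)
    gcongr
  have hBA : B ≤ A := by
    rw [hA, hB]
    exact intervalIntegral.integral_mono_on hπ2 (hcg.intervalIntegrable _ _)
      (hcf.intervalIntegrable _ _) hgle
  -- A - B ≤ K / ℓ²
  have hH : (π/2) / (ℓ ^ 2 * Real.sqrt ((π/2) ^ 2 + ℓ ^ 2)) ≤ 1 / ℓ ^ 2 := by
    have hs : π/2 ≤ Real.sqrt ((π/2) ^ 2 + ℓ ^ 2) := by
      have h := Real.sqrt_le_sqrt (show (π/2) ^ 2 ≤ (π/2) ^ 2 + ℓ ^ 2 by nlinarith [sq_nonneg ℓ])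
      rwa [Real.sqrt_sq hπ2] at h
    rw [div_le_div_iff₀ (by positivity) (by positivity)]
    nlinarith [pow_pos hℓ 2, mul_le_mul_of_nonneg_left hs (le_of_lt (pow_pos hℓ 2))]
  have hsub : A - B ≤ (5 * π ^ 7 / 384) * (1 / ℓ ^ 2) := by
    have h1 : A - B = ∫ θ in (0:ℝ)..(π/2),
        (1 / ((Real.sin θ ^ 2 + ℓ ^ 2) ^ 2 * Real.sqrt (Real.sin θ ^ 2 + ℓ ^ 2))
          - 1 / ((θ ^ 2 + ℓ ^ 2) ^ 2 * Real.sqrt (θ ^ 2 + ℓ ^ 2))) := by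
      rw [hA, hB, intervalIntegral.integral_sub (hcf.intervalIntegrable _ _)
        (hcg.intervalIntegrable _ _)]
    have h2 : (∫ θ in (0:ℝ)..(π/2),
        (1 / ((Real.sin θ ^ 2 + ℓ ^ 2) ^ 2 * Real.sqrt (Real.sin θ ^ 2 + ℓ ^ 2))
          - 1 / ((θ ^ 2 + ℓ ^ 2) ^ 2 * Real.sqrt (θ ^ 2 + ℓ ^ 2))))
        ≤ ∫ θ in (0:ℝ)..(π/2),
            (5 * π ^ 7 / 384) * (1 / ((θ ^ 2 + ℓ ^ 2) * Real.sqrt (θ ^ 2 + ℓ ^ 2))) := by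
      apply intervalIntegral.integral_mono_on hπ2
        ((hcf.sub hcg).intervalIntegrable _ _)
        ((continuous_const.mul hch).intervalIntegrable _ _)
      exact fun θ hθ => aux_pointwise hℓ hθ.1 hθ.2
    have h3 : (∫ θ in (0:ℝ)..(π/2),
        (5 * π ^ 7 / 384) * (1 / ((θ ^ 2 + ℓ ^ 2) * Real.sqrt (θ ^ 2 + ℓ ^ 2))))
        = (5 * π ^ 7 / 384) * ((π/2) / (ℓ ^ 2 * Real.sqrt ((π/2) ^ 2 + ℓ ^ 2))) := by
      rw [intervalIntegral.integral_const_mul, hIh]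
    have h4 : (5 * π ^ 7 / 384) * ((π/2) / (ℓ ^ 2 * Real.sqrt ((π/2) ^ 2 + ℓ ^ 2)))
        ≤ (5 * π ^ 7 / 384) * (1 / ℓ ^ 2) :=
      mul_le_mul_of_nonneg_left hH (by positivity)
    linarith [h1, h2, h3.le, h3.ge, h4]
  -- B vs 2/3/ℓ⁴
  have hupos : (0:ℝ) < (π/2) ^ 2 + ℓ ^ 2 := by positivity
  have htpos : (0:ℝ) < Real.sqrt ((π/2) ^ 2 + ℓ ^ 2) := Real.sqrt_pos.2 hupos
  have hvu : (π/2) ^ 2 ≤ (π/2) ^ 2 + ℓ ^ 2 := by nlinarith [sq_nonneg ℓ]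
  have hlow := aux_mvt32_lower (v := (π/2) ^ 2) (u := (π/2) ^ 2 + ℓ ^ 2) (by positivity) hvu
  have hup := aux_mvt32_upper (v := (π/2) ^ 2) (u := (π/2) ^ 2 + ℓ ^ 2) (by positivity) hvu
  rw [Real.sqrt_sq hπ2] at hlow hup
  have hQ1 : B ≤ (2/3) / ℓ ^ 4 := by
    rw [hIg, div_le_div_iff₀ (by positivity) (by positivity)]
    nlinarith [mul_le_mul_of_nonneg_left hlow (le_of_lt (pow_pos hℓ 4))]
  have hQ2 : (2/3) / ℓ ^ 4 - B ≤ 1 / ℓ ^ 2 := by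
    rw [hIg]
    have e1 : (2/3) / ℓ ^ 4 - (π/2) * (3 * ℓ ^ 2 + 2 * (π/2) ^ 2) /
        (3 * ℓ ^ 4 * (((π/2) ^ 2 + ℓ ^ 2) * Real.sqrt ((π/2) ^ 2 + ℓ ^ 2)))
        = (2 * (((π/2) ^ 2 + ℓ ^ 2) * Real.sqrt ((π/2) ^ 2 + ℓ ^ 2))
            - (π/2) * (3 * ℓ ^ 2 + 2 * (π/2) ^ 2)) /
          (3 * ℓ ^ 4 * (((π/2) ^ 2 + ℓ ^ 2) * Real.sqrt ((π/2) ^ 2 + ℓ ^ 2))) := by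
      field_simp
    have e2 : 2 * (((π/2) ^ 2 + ℓ ^ 2) * Real.sqrt ((π/2) ^ 2 + ℓ ^ 2))
        - (π/2) * (3 * ℓ ^ 2 + 2 * (π/2) ^ 2)
        ≤ 3 * Real.sqrt ((π/2) ^ 2 + ℓ ^ 2) * ℓ ^ 2 := by
      nlinarith [hup, sq_nonneg ℓ]
    have e3 : (3 * Real.sqrt ((π/2) ^ 2 + ℓ ^ 2) * ℓ ^ 2) /
        (3 * ℓ ^ 4 * (((π/2) ^ 2 + ℓ ^ 2) * Real.sqrt ((π/2) ^ 2 + ℓ ^ 2)))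
        = 1 / (ℓ ^ 2 * ((π/2) ^ 2 + ℓ ^ 2)) := by
      field_simp
    have e4 : 1 / (ℓ ^ 2 * ((π/2) ^ 2 + ℓ ^ 2)) ≤ 1 / ℓ ^ 2 := by
      rw [div_le_div_iff₀ (by positivity) (by positivity)]
      nlinarith [mul_le_mul_of_nonneg_left
        (show (1:ℝ) ≤ (π/2) ^ 2 + ℓ ^ 2 by nlinarith [sq_nonneg ℓ])
        (sq_nonneg ℓ)]
    have e5 : (2 * (((π/2) ^ 2 + ℓ ^ 2) * Real.sqrt ((π/2) ^ 2 + ℓ ^ 2))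
            - (π/2) * (3 * ℓ ^ 2 + 2 * (π/2) ^ 2)) /
          (3 * ℓ ^ 4 * (((π/2) ^ 2 + ℓ ^ 2) * Real.sqrt ((π/2) ^ 2 + ℓ ^ 2)))
        ≤ (3 * Real.sqrt ((π/2) ^ 2 + ℓ ^ 2) * ℓ ^ 2) /
          (3 * ℓ ^ 4 * (((π/2) ^ 2 + ℓ ^ 2) * Real.sqrt ((π/2) ^ 2 + ℓ ^ 2))) := by
      gcongr
    linarith [e1, e2, e3.le, e4, e5]
  -- combine
  have tri := abs_sub_le A B ((2/3) / ℓ ^ 4)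
  have habs1 : |A - B| = A - B := abs_of_nonneg (by linarith)
  have habs2 : |B - (2/3) / ℓ ^ 4| = (2/3) / ℓ ^ 4 - B := by
    rw [abs_sub_comm]; exact abs_of_nonneg (by linarith)
  have hfin : (5 * π ^ 7 / 384 + 1) / ℓ ^ 2
      = (5 * π ^ 7 / 384) * (1 / ℓ ^ 2) + 1 / ℓ ^ 2 := by ring
  rw [hfin]
  calc |A - (2/3) / ℓ ^ 4| ≤ |A - B| + |B - (2/3) / ℓ ^ 4| := tri
    _ = (A - B) + ((2/3) / ℓ ^ 4 - B) := by rw [habs1, habs2]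
    _ ≤ (5 * π ^ 7 / 384) * (1 / ℓ ^ 2) + 1 / ℓ ^ 2 := by linarith
end

section
/- Let ψ(κ) = κ log|κ| (with ψ(0) = 0). Suppose |κ - κʰ| ≤ M h with M > 0, h ∈ (0, 1/e), and |κ|, |κʰ| ≤ K. Then |ψ(κ) - ψ(κʰ)| ≤ C h log(1/h) for a constant C depending only on M and K. -/
open Real Set

-- bound |t log t| for 0 ≤ t ≤ c*h
lemma small_bound (h t c : ℝ) (hh0 : 0 < h) (hL : 1 ≤ Real.log (1/h))
    (hc : 0 < c) (ht0 : 0 ≤ t) (ht : t ≤ c * h) :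
    |t * Real.log t| ≤ (c + 1 + c * |Real.log c|) * (h * Real.log (1/h)) := by
  have hL0 : (0:ℝ) < Real.log (1/h) := lt_of_lt_of_le one_pos hL
  have hh1 : h ≤ 1 := by
    by_contra hcon
    push_neg at hcon
    have : Real.log (1/h) < 0 := by
      apply Real.log_neg
      · positivity
      · rw [div_lt_one hh0]; linarith
    linarith
  rcases eq_or_lt_of_le ht0 with rfl | ht0'
  · simp only [zero_mul, abs_zero]
    positivity
  rcases le_or_gt t 1 with h1 | h1
  · -- t ≤ 1 : |t log t| = t * log(1/t) ≤ t*L + (h - t)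
    have hlt : Real.log t ≤ 0 := Real.log_nonpos (le_of_lt ht0') h1
    have habs : |t * Real.log t| = t * (-Real.log t) := by
      rw [abs_of_nonpos (mul_nonpos_of_nonneg_of_nonpos (le_of_lt ht0') hlt)]
      ring
    have hsplit : -Real.log t = Real.log (1/h) + Real.log (h/t) := by
      rw [← Real.log_inv, ← Real.log_mul (by positivity) (by positivity)]
      congr 1
      field_simp
    have hkey : Real.log (h/t) ≤ h/t - 1 := Real.log_le_sub_one_of_pos (by positivity)
    have h2 : t * Real.log (h/t) ≤ h - t := by
      have h2a := mul_le_mul_of_nonneg_left hkey (le_of_lt ht0')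
      have ht' : t * (h/t - 1) = h - t := by field_simp
      linarith [ht' ▸ h2a]
    rw [habs, hsplit, mul_add]
    have h3 : t * Real.log (1/h) ≤ c * h * Real.log (1/h) :=
      mul_le_mul_of_nonneg_right ht (le_of_lt hL0)
    have h4 : h - t ≤ h * Real.log (1/h) := by nlinarith
    have h5 : (0:ℝ) ≤ c * |Real.log c| * (h * Real.log (1/h)) := by positivity
    nlinarith
  · -- 1 < t : t log t ≤ ch log(ch) ≤ ch |log c|
    have hlt : 0 < Real.log t := Real.log_pos h1
    have hch : 1 < c * h := lt_of_lt_of_le h1 ht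
    have hlch : Real.log t ≤ Real.log (c * h) := Real.log_le_log ht0' ht
    have hlogch : Real.log (c * h) ≤ |Real.log c| := by
      rw [Real.log_mul (ne_of_gt hc) (ne_of_gt hh0)]
      have ha1 : Real.log h ≤ 0 := Real.log_nonpos (le_of_lt hh0) hh1
      have ha2 := le_abs_self (Real.log c)
      linarith
    have habs : |t * Real.log t| = t * Real.log t := abs_of_nonneg (by positivity)
    have h2 : t * Real.log t ≤ c * h * |Real.log c| := by
      calc t * Real.log t ≤ (c * h) * Real.log (c * h) := by
            apply mul_le_mul ht hlch (le_of_lt hlt) (by positivity)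
        _ ≤ c * h * |Real.log c| := by
            apply mul_le_mul_of_nonneg_left hlogch (by positivity)
    rw [habs]
    have h3 : c * h * |Real.log c| ≤ c * |Real.log c| * (h * Real.log (1/h)) := by
      nlinarith [mul_le_mul_of_nonneg_left hL (show (0:ℝ) ≤ c * h * |Real.log c| by positivity)]
    have h5 : (0:ℝ) ≤ (c + 1) * (h * Real.log (1/h)) := by positivity
    nlinarith

-- bound |log s| for M*h ≤ s ≤ K
lemma log_bound (M K h s : ℝ) (hM : 0 < M) (hK : 0 < K) (hh0 : 0 < h)
    (hL : 1 ≤ Real.log (1/h)) (hs1 : M * h ≤ s) (hs2 : s ≤ K) :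
    |Real.log s| ≤ (1 + |Real.log M| + |Real.log K|) * Real.log (1/h) := by
  have hL0 : (0:ℝ) < Real.log (1/h) := lt_of_lt_of_le one_pos hL
  have hs0 : 0 < s := lt_of_lt_of_le (by positivity) hs1
  rcases le_or_gt s 1 with h1 | h1
  · have hlt : Real.log s ≤ 0 := Real.log_nonpos (le_of_lt hs0) h1
    rw [abs_of_nonpos hlt]
    have hmono : Real.log (M * h) ≤ Real.log s := Real.log_le_log (by positivity) hs1
    rw [Real.log_mul (ne_of_gt hM) (ne_of_gt hh0)] at hmono
    have hlh : Real.log h = -Real.log (1/h) := by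
      rw [one_div, Real.log_inv]; ring
    have hM' : -|Real.log M| ≤ Real.log M := neg_abs_le _
    have hK' : (0:ℝ) ≤ |Real.log K| := abs_nonneg _
    nlinarith [mul_le_mul_of_nonneg_left hL (abs_nonneg (Real.log M)),
      mul_le_mul_of_nonneg_left hL (abs_nonneg (Real.log K))]
  · have hlt : 0 < Real.log s := Real.log_pos h1
    rw [abs_of_pos hlt]
    have h2 : Real.log s ≤ Real.log K := Real.log_le_log hs0 hs2
    have h3 : Real.log K ≤ |Real.log K| := le_abs_self _
    have hM' : (0:ℝ) ≤ |Real.log M| := abs_nonneg _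
    nlinarith [mul_le_mul_of_nonneg_left hL (abs_nonneg (Real.log K))]

theorem kappa_log_kappa_error (M K : ℝ) (hM : 0 < M) (hK : 0 < K) :
    ∃ C > 0, ∀ h κ κh : ℝ, 0 < h → h < 1 / Real.exp 1 →
      |κ - κh| ≤ M * h → |κ| ≤ K → |κh| ≤ K →
      abs (κ * Real.log (abs κ) - κh * Real.log (abs κh)) ≤ C * h * Real.log (1 / h) := by
  set c₁ : ℝ := 2*M + 1 + 2*M * |Real.log (2*M)| with hc₁
  set c₂ : ℝ := M * (2 + |Real.log M| + |Real.log K|) with hc₂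
  have hc₁0 : 0 < c₁ := by positivity
  have hc₂0 : 0 < c₂ := by positivity
  refine ⟨2*c₁ + c₂, by positivity, ?_⟩
  intro h κ κh hh0 hhe hdiff hκK hκhK
  have hL : 1 ≤ Real.log (1/h) := by
    have h1 : Real.exp 1 < 1/h := by
      rw [lt_div_iff₀ hh0]
      rw [div_eq_mul_inv] at hhe
      calc Real.exp 1 * h < Real.exp 1 * (1 * (Real.exp 1)⁻¹) := by
            apply mul_lt_mul_of_pos_left _ (Real.exp_pos 1)
            simpa using hhe
        _ = 1 := by field_simp
    have h2 := Real.log_lt_log (Real.exp_pos 1) h1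
    rw [Real.log_exp] at h2
    linarith
  have hL0 : (0:ℝ) < Real.log (1/h) := lt_of_lt_of_le one_pos hL
  -- key symmetric claim
  have key : ∀ a b : ℝ, abs b ≤ abs a → abs (a - b) ≤ M * h → abs a ≤ K → abs b ≤ K →
      abs (a * Real.log (abs a) - b * Real.log (abs b)) ≤ (2*c₁ + c₂) * h * Real.log (1/h) := by
    intro a b hba hab haK hbK
    rcases le_or_gt (abs a) (2 * M * h) with hsmall | hbig
    · -- both small
      have hbs : abs b ≤ 2 * M * h := le_trans hba hsmall
      have h1 : abs (a * Real.log (abs a)) ≤ c₁ * (h * Real.log (1/h)) := by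
        have hb := small_bound h (abs a) (2*M) hh0 hL (by positivity) (abs_nonneg a)
          (by linarith)
        rwa [abs_mul, abs_abs, ← abs_mul] at hb
      have h2 : abs (b * Real.log (abs b)) ≤ c₁ * (h * Real.log (1/h)) := by
        have hb := small_bound h (abs b) (2*M) hh0 hL (by positivity) (abs_nonneg b)
          (by linarith)
        rwa [abs_mul, abs_abs, ← abs_mul] at hb
      calc abs (a * Real.log (abs a) - b * Real.log (abs b))
          ≤ abs (a * Real.log (abs a)) + abs (b * Real.log (abs b)) := abs_sub _ _
        _ ≤ 2 * c₁ * (h * Real.log (1/h)) := by linarith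
        _ ≤ (2*c₁ + c₂) * h * Real.log (1/h) := by
            nlinarith [mul_nonneg (mul_nonneg hc₂0.le hh0.le) hL0.le]
    · -- both ≥ M*h in abs
      have hb0 : M * h ≤ abs b := by
        have h1 : abs a - abs b ≤ abs (a - b) := abs_sub_abs_le_abs_sub a b
        linarith
      have ha0 : M * h ≤ abs a := le_trans hb0 hba
      have hbpos : 0 < abs b := lt_of_lt_of_le (by positivity) hb0
      have hapos : 0 < abs a := lt_of_lt_of_le hbpos hba
      have hdecomp : a * Real.log (abs a) - b * Real.log (abs b)
          = (a - b) * Real.log (abs a) + b * (Real.log (abs a) - Real.log (abs b)) := by ring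
      have hterm1 : abs ((a - b) * Real.log (abs a))
          ≤ c₂ * h * Real.log (1/h) - M * h * Real.log (1/h) := by
        rw [abs_mul]
        have hlog := log_bound M K h (abs a) hM hK hh0 hL ha0 haK
        have hmm : abs (a - b) * abs (Real.log (abs a))
            ≤ (M*h) * ((1 + |Real.log M| + |Real.log K|) * Real.log (1/h)) :=
          mul_le_mul hab hlog (abs_nonneg _) (by positivity)
        have heq : c₂ * h * Real.log (1/h) - M * h * Real.log (1/h)
            = (M*h) * ((1 + |Real.log M| + |Real.log K|) * Real.log (1/h)) := by
          rw [hc₂]; ring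
        linarith [heq ▸ hmm]
      have hterm2 : abs (b * (Real.log (abs a) - Real.log (abs b)))
          ≤ M * h * Real.log (1/h) := by
        have hmono : Real.log (abs b) ≤ Real.log (abs a) := Real.log_le_log hbpos hba
        have hratio : Real.log (abs a) - Real.log (abs b) ≤ abs (a - b) / abs b := by
          have h1 : Real.log (abs a / abs b) ≤ abs a / abs b - 1 :=
            Real.log_le_sub_one_of_pos (by positivity)
          rw [Real.log_div (ne_of_gt hapos) (ne_of_gt hbpos)] at h1
          have h3 : abs a - abs b ≤ abs (a - b) := abs_sub_abs_le_abs_sub a b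
          have h4 : abs a / abs b - 1 = (abs a - abs b) / abs b := by field_simp
          have h5 : (abs a - abs b) / abs b ≤ abs (a - b) / abs b := by gcongr
          linarith
        have h6 : abs (b * (Real.log (abs a) - Real.log (abs b)))
            = abs b * (Real.log (abs a) - Real.log (abs b)) := by
          rw [abs_mul, abs_of_nonneg (show (0:ℝ) ≤ Real.log (abs a) - Real.log (abs b) by linarith)]
        rw [h6]
        have h7 : abs b * (Real.log (abs a) - Real.log (abs b))
            ≤ abs b * (abs (a - b) / abs b) :=
          mul_le_mul_of_nonneg_left hratio (abs_nonneg b)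
        have h8 : abs b * (abs (a - b) / abs b) = abs (a - b) := by field_simp
        have h9 : abs (a - b) ≤ M * h * Real.log (1/h) := by nlinarith [abs_nonneg (a-b)]
        linarith [h8 ▸ h7]
      calc abs (a * Real.log (abs a) - b * Real.log (abs b))
          = abs ((a - b) * Real.log (abs a) + b * (Real.log (abs a) - Real.log (abs b))) := by
            rw [hdecomp]
        _ ≤ abs ((a - b) * Real.log (abs a)) + abs (b * (Real.log (abs a) - Real.log (abs b))) :=
            abs_add_le _ _
        _ ≤ (2*c₁ + c₂) * h * Real.log (1/h) := by
            nlinarith [mul_nonneg (mul_nonneg hc₁0.le hh0.le) hL0.le]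
  rcases le_total (abs κh) (abs κ) with hle | hle
  · exact key κ κh hle hdiff hκK hκhK
  · have := key κh κ hle (by rwa [abs_sub_comm]) hκhK hκK
    rwa [abs_sub_comm] at this
end
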